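/- (Euler–Maclaurin estimate for G_N) For every K ∈ (0, β) there exist C_K > 0 and n_K such that for all n ≥ n_K, sup over h ∈ [-β+K, β-K] of | G_n(h) - G(h) | ≤ C_K/n², where G_n(h) := (1/n) Σ_{i=1}^n L( (h/2)(1 - (2i-1)/n) ) and G(h) := ∫_0^1 L(h(1/2 - x)) dx. -/

import Mathlib

open Set

lemma midpoint_key (φ D : ℝ → ℝ) (u v M : ℝ) (huv : u ≤ v)
    (hd : ∀ t ∈ Set.Icc u v, HasDerivAt φ (D t) t)
    (hDc : ContinuousOn D (Set.Icc u v))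
    (hB : ∀ t ∈ Set.Icc u v, |D t - D ((u + v) / 2)| ≤ M) :
    |(v - u) * φ ((u + v) / 2) - ∫ x in u..v, φ x| ≤ M * (v - u) ^ 2 := by
  set m := (u + v) / 2 with hm
  have hmI : m ∈ Set.Icc u v := ⟨by rw [hm]; linarith, by rw [hm]; linarith⟩
  have hsub : ∀ x ∈ Set.Icc u v, Set.uIcc m x ⊆ Set.Icc u v :=
    fun x hx => Set.uIcc_subset_Icc hmI hx
  have hφc : ContinuousOn φ (Set.Icc u v) :=
    fun x hx => ((hd x hx).continuousAt).continuousWithinAt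
  have hM0 : 0 ≤ M := le_trans (abs_nonneg _) (hB m hmI)
  have hT : ∀ x ∈ Set.Icc u v, φ x - φ m - D m * (x - m) = ∫ t in m..x, (D t - D m) := by
    intro x hx
    have h1 : ∫ t in m..x, D t = φ x - φ m :=
      intervalIntegral.integral_eq_sub_of_hasDerivAt (fun t ht => hd t (hsub x hx ht))
        ((hDc.mono (hsub x hx)).intervalIntegrable)
    have h2 : ∫ t in m..x, (D t - D m) = (∫ t in m..x, D t) - (x - m) * D m := by
      rw [intervalIntegral.integral_sub ((hDc.mono (hsub x hx)).intervalIntegrable)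
        intervalIntegrable_const]
      simp [intervalIntegral.integral_const, smul_eq_mul]
    rw [h2, h1]; ring
  have hTb : ∀ x ∈ Set.Icc u v, |φ x - φ m - D m * (x - m)| ≤ M * (v - u) := by
    intro x hx
    rw [hT x hx]
    have hb : ∀ t ∈ Set.uIoc m x, ‖D t - D m‖ ≤ M := by
      intro t ht
      have htI : t ∈ Set.Icc u v := (hsub x hx) (Set.uIoc_subset_uIcc ht)
      simpa [Real.norm_eq_abs] using hB t htI
    have := intervalIntegral.norm_integral_le_of_norm_le_const hb
    rw [Real.norm_eq_abs] at this
    refine le_trans this ?_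
    have hxm : |x - m| ≤ v - u := by
      rw [abs_le]; constructor <;> [linarith [hx.1, hmI.2]; linarith [hx.2, hmI.1]]
    exact mul_le_mul_of_nonneg_left hxm hM0
  have hint1 : IntervalIntegrable φ MeasureTheory.volume u v := by
    apply ContinuousOn.intervalIntegrable
    rwa [Set.uIcc_of_le huv]
  have i3 : IntervalIntegrable (fun x : ℝ => D m * (x - m)) MeasureTheory.volume u v :=
    (continuous_const.mul (continuous_id.sub continuous_const)).intervalIntegrable _ _
  have key : (∫ x in u..v, φ x) - (v - u) * φ m
      = ∫ x in u..v, (φ x - φ m - D m * (x - m)) := by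
    have i2 : IntervalIntegrable (fun _ : ℝ => φ m) MeasureTheory.volume u v :=
      intervalIntegrable_const
    rw [intervalIntegral.integral_sub (hint1.sub i2) i3, intervalIntegral.integral_sub hint1 i2]
    have e0 : (∫ x in u..v, (x - m)) = 0 := by
      rw [intervalIntegral.integral_comp_sub_right (fun x => x) m, integral_id, hm]; ring
    have e1 : (∫ x in u..v, (D m * (x - m))) = 0 := by
      rw [intervalIntegral.integral_const_mul, e0, mul_zero]
    rw [e1, intervalIntegral.integral_const]
    simp [smul_eq_mul]
  have hb2 : ∀ x ∈ Set.uIoc u v, ‖φ x - φ m - D m * (x - m)‖ ≤ M * (v - u) := by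
    intro x hx
    have : x ∈ Set.Icc u v := Set.mem_Icc_of_Ioc (by rwa [Set.uIoc_of_le huv] at hx)
    simpa [Real.norm_eq_abs] using hTb x this
  have := intervalIntegral.norm_integral_le_of_norm_le_const hb2
  rw [Real.norm_eq_abs] at this
  rw [← key] at this
  calc |(v - u) * φ m - ∫ x in u..v, φ x|
      = |(∫ x in u..v, φ x) - (v - u) * φ m| := abs_sub_comm _ _
    _ ≤ M * (v - u) * |v - u| := this
    _ = M * (v - u) ^ 2 := by rw [abs_of_nonneg (by linarith)]; ring

lemma hasSum_int_exp (b h : ℝ) (hh : |h| < b) :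
    HasSum (fun k : ℤ => Real.exp (h * k) * Real.exp (-b * |(k : ℝ)|))
      ((1 - Real.exp (h - b))⁻¹ + Real.exp (-h - b) * (1 - Real.exp (-h - b))⁻¹) := by
  obtain ⟨hh1, hh2⟩ := abs_lt.mp hh
  have h1 : Real.exp (h - b) < 1 := Real.exp_lt_one_iff.mpr (by linarith)
  have h2 : Real.exp (-h - b) < 1 := Real.exp_lt_one_iff.mpr (by linarith)
  apply HasSum.of_nat_of_neg_add_one
  · have e : (fun n : ℕ => Real.exp (h * ((n : ℤ) : ℝ)) * Real.exp (-b * |((n : ℤ) : ℝ)|))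
        = fun n : ℕ => Real.exp (h - b) ^ n := by
      funext n
      rw [← Real.exp_nat_mul]
      push_cast
      rw [abs_of_nonneg (Nat.cast_nonneg n), ← Real.exp_add]
      ring_nf
    rw [e]
    exact hasSum_geometric_of_lt_one (Real.exp_pos _).le h1
  · have e : (fun n : ℕ => Real.exp (h * ((-(n + 1) : ℤ) : ℝ)) * Real.exp (-b * |((-(n + 1) : ℤ) : ℝ)|))
        = fun n : ℕ => Real.exp (-h - b) * Real.exp (-h - b) ^ n := by
      funext n
      rw [← Real.exp_nat_mul]
      push_cast
      rw [abs_of_nonpos (neg_nonpos.mpr (by positivity)), ← Real.exp_add, ← Real.exp_add]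
      ring_nf
    rw [e]
    exact (hasSum_geometric_of_lt_one (Real.exp_pos _).le h2).mul_left _

set_option maxHeartbeats 2000000 in
/-- Euler–Maclaurin estimate: for every `K ∈ (0, β)` there exist `C_K > 0` and `n_K`
such that for all `n ≥ n_K` and all `h ∈ [-β+K, β-K]`, `|G_n(h) - G(h)| ≤ C_K/n²`,
where `G_n(h) = (1/n) Σ_{i=1}^n L((h/2)(1-(2i-1)/n))` and
`G(h) = ∫_0^1 L(h(1/2-x)) dx`. -/
theorem Gn_approx_G (β : ℝ) (hβ : 0 < β)
    (c : ℝ) (hc : c = ∑' k : ℤ, Real.exp (-(β / 2) * |(k : ℝ)|))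
    (L : ℝ → ℝ)
    (hL : ∀ h : ℝ, L h =
      Real.log (∑' k : ℤ, Real.exp (h * k) * Real.exp (-(β / 2) * |(k : ℝ)|) / c))
    (G : ℝ → ℝ)
    (hG : ∀ h : ℝ, G h = ∫ x in (0:ℝ)..1, L (h * (1 / 2 - x)))
    (Gn : ℕ → ℝ → ℝ)
    (hGn : ∀ n : ℕ, ∀ h : ℝ, Gn n h =
      (1 / (n : ℝ)) * ∑ i ∈ Finset.range n,
        L ((h / 2) * (1 - (2 * ((i : ℝ) + 1) - 1) / n))) :
    ∀ K ∈ Ioo (0:ℝ) β, ∃ C > 0, ∃ nK : ℕ, ∀ n ≥ nK,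
      ∀ h ∈ Icc (-β + K) (β - K), |Gn n h - G h| ≤ C / (n : ℝ) ^ 2 := by
  intro K hK
  obtain ⟨hK0, hKβ⟩ := hK
  set b := β / 2 with hb
  have hb0 : 0 < b := by rw [hb]; linarith
  set O : Set ℝ := Ioo (-b) b with hO_def
  have hO : IsOpen O := isOpen_Ioo
  -- c is positive
  have hc_sum : HasSum (fun k : ℤ => Real.exp (-b * |(k : ℝ)|))
      ((1 - Real.exp (-b))⁻¹ + Real.exp (-b) * (1 - Real.exp (-b))⁻¹) := by
    have := hasSum_int_exp b 0 (by simpa using hb0)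
    simpa using this
  have hexpb : Real.exp (-b) < 1 := Real.exp_lt_one_iff.mpr (by linarith)
  have hc_pos : 0 < c := by
    rw [hc, hc_sum.tsum_eq]
    have i1 : 0 < (1 - Real.exp (-b))⁻¹ := inv_pos.mpr (by linarith)
    have i2 : 0 ≤ Real.exp (-b) * (1 - Real.exp (-b))⁻¹ :=
      mul_nonneg (Real.exp_pos _).le i1.le
    linarith
  -- closed form of L on O
  set F : ℝ → ℝ := fun x =>
    (1 - Real.exp (x - b))⁻¹ + Real.exp (-x - b) * (1 - Real.exp (-x - b))⁻¹ with hF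
  have hFpos : ∀ x ∈ O, 0 < F x := by
    intro x hx
    rw [hO_def, mem_Ioo] at hx
    obtain ⟨hx1, hx2⟩ := hx
    have e1 : Real.exp (x - b) < 1 := Real.exp_lt_one_iff.mpr (by linarith)
    have e2 : Real.exp (-x - b) < 1 := Real.exp_lt_one_iff.mpr (by linarith)
    have i1 : 0 < (1 - Real.exp (x - b))⁻¹ := inv_pos.mpr (by linarith)
    have i2 : 0 ≤ Real.exp (-x - b) * (1 - Real.exp (-x - b))⁻¹ :=
      mul_nonneg (Real.exp_pos _).le (inv_pos.mpr (by linarith)).le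
    rw [hF]; dsimp only; linarith
  have hLF : ∀ x ∈ O, L x = Real.log (F x / c) := by
    intro x hx
    rw [hO_def, mem_Ioo] at hx
    have hs := hasSum_int_exp b x (abs_lt.mpr ⟨by linarith [hx.1], hx.2⟩)
    rw [hL x, tsum_div_const, hs.tsum_eq, hF]
  -- smoothness of L on O
  have hΛ : ContDiffOn ℝ 2 (fun x => Real.log (F x / c)) O := by
    intro x hx
    apply ContDiffAt.contDiffWithinAt
    have hxO := hx
    rw [hO_def, mem_Ioo] at hx
    have e1 : Real.exp (x - b) < 1 := Real.exp_lt_one_iff.mpr (by linarith [hx.1, hx.2])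
    have e2 : Real.exp (-x - b) < 1 := Real.exp_lt_one_iff.mpr (by linarith [hx.1, hx.2])
    have c1 : ContDiffAt ℝ 2 (fun y : ℝ => 1 - Real.exp (y - b)) x :=
      (contDiff_const.sub ((Real.contDiff_exp.of_le le_top).comp
        (contDiff_id.sub contDiff_const))).contDiffAt
    have c2 : ContDiffAt ℝ 2 (fun y : ℝ => 1 - Real.exp (-y - b)) x :=
      (contDiff_const.sub ((Real.contDiff_exp.of_le le_top).comp
        ((contDiff_id.neg).sub contDiff_const))).contDiffAt
    have c3 : ContDiffAt ℝ 2 (fun y : ℝ => Real.exp (-y - b)) x :=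
      ((Real.contDiff_exp.of_le le_top).comp ((contDiff_id.neg).sub contDiff_const)).contDiffAt
    have cF : ContDiffAt ℝ 2 F x := by
      rw [hF]
      exact (c1.inv (ne_of_gt (by linarith))).add
        (c3.mul (c2.inv (ne_of_gt (by linarith))))
    exact (cF.div_const c).log (ne_of_gt (div_pos (hFpos x hxO) hc_pos))
  have hLO : ContDiffOn ℝ 2 L O := hΛ.congr (fun x hx => hLF x hx)
  set L1 := deriv L with hL1def
  have hL1 : ContDiffOn ℝ 1 L1 O := hLO.deriv_of_isOpen hO (by norm_num)
  have hL2cont : ContinuousOn (deriv L1) O := hL1.continuousOn_deriv_of_isOpen hO le_rfl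
  have hder1 : ∀ x ∈ O, HasDerivAt L (L1 x) x := fun x hx =>
    ((hLO.contDiffAt (hO.mem_nhds hx)).differentiableAt (by norm_num)).hasDerivAt
  have hder2 : ∀ x ∈ O, HasDerivAt L1 (deriv L1 x) x := fun x hx =>
    ((hL1.contDiffAt (hO.mem_nhds hx)).differentiableAt (by norm_num)).hasDerivAt
  -- bound on second derivative on the compact set J
  set a := β - K with ha
  have ha0 : 0 < a := by rw [ha]; linarith
  have hab : a / 2 < b := by rw [ha, hb]; linarith
  set J : Set ℝ := Icc (-(a/2)) (a/2) with hJ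
  have hJO : J ⊆ O := by
    intro x hx
    rw [hJ, mem_Icc] at hx
    rw [hO_def, mem_Ioo]
    exact ⟨by linarith [hx.1], by linarith [hx.2]⟩
  obtain ⟨C0, hC0⟩ := (isCompact_Icc).exists_bound_of_continuousOn (hL2cont.mono hJO)
  set M := max C0 0 with hM
  have hM0 : 0 ≤ M := le_max_right _ _
  have hlip : ∀ x ∈ J, ∀ y ∈ J, |L1 y - L1 x| ≤ M * |y - x| := by
    intro x hx y hy
    have := Convex.norm_image_sub_le_of_norm_hasDerivWithin_le (C := M)
      (fun t ht => (hder2 t (hJO ht)).hasDerivWithinAt)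
      (fun t ht => le_trans (hC0 t ht) (le_max_left C0 0)) (convex_Icc _ _) hx hy
    simpa [Real.norm_eq_abs] using this
  refine ⟨M * β ^ 2 + 1, by positivity, 1, ?_⟩
  intro n hn h hh
  have hn0 : 0 < (n : ℝ) := by exact_mod_cast Nat.lt_of_lt_of_le Nat.zero_lt_one hn
  have hnne : (n : ℝ) ≠ 0 := ne_of_gt hn0
  rw [mem_Icc] at hh
  obtain ⟨hh1, hh2⟩ := hh
  have hha : |h| ≤ a := abs_le.mpr ⟨by rw [ha]; linarith, by rw [ha]; linarith⟩
  set φ : ℝ → ℝ := fun x => L (h * (1/2 - x)) with hφ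
  have hmem : ∀ x ∈ Icc (0:ℝ) 1, h * (1/2 - x) ∈ J := by
    intro x hx
    rw [mem_Icc] at hx
    have h1 : |h * (1/2 - x)| ≤ a / 2 := by
      rw [abs_mul]
      have h2 : |1/2 - x| ≤ 1/2 := abs_le.mpr ⟨by linarith [hx.2], by linarith [hx.1]⟩
      calc |h| * |1/2 - x| ≤ a * (1/2) := mul_le_mul hha h2 (abs_nonneg _) ha0.le
        _ = a / 2 := by ring
    have h3 := abs_le.mp h1
    rw [hJ, mem_Icc]
    exact ⟨h3.1, h3.2⟩
  set D : ℝ → ℝ := fun t => L1 (h * (1/2 - t)) * (-h) with hD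
  have hdAt : ∀ t ∈ Icc (0:ℝ) 1, HasDerivAt φ (D t) t := by
    intro t ht
    have hz : h * (1/2 - t) ∈ O := hJO (hmem t ht)
    have inner : HasDerivAt (fun x : ℝ => h * (1/2 - x)) (-h) t := by
      simpa using (((hasDerivAt_id t).const_sub (1/2 : ℝ)).const_mul h)
    have := (hder1 _ hz).comp t inner
    exact this
  have hφc : ContinuousOn φ (Icc (0:ℝ) 1) :=
    fun x hx => (hdAt x hx).continuousAt.continuousWithinAt
  have hDc : ContinuousOn D (Icc (0:ℝ) 1) := by
    rw [hD]
    apply ContinuousOn.mul ?_ continuousOn_const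
    have : ContinuousOn (L1 ∘ (fun t : ℝ => h * (1/2 - t))) (Icc (0:ℝ) 1) := by
      apply ContinuousOn.comp hL1.continuousOn
      · exact (continuous_const.mul (continuous_const.sub continuous_id)).continuousOn
      · intro x hx; exact hJO (hmem x hx)
    exact this
  set u : ℕ → ℝ := fun i => (i : ℝ) / n with hu
  have hu01 : ∀ i : ℕ, i ≤ n → u i ∈ Icc (0:ℝ) 1 := by
    intro i hi
    rw [hu, mem_Icc]
    constructor
    · positivity
    · rw [div_le_one hn0]; exact_mod_cast hi
  have hIcc_sub : ∀ i : ℕ, i < n → Icc (u i) (u (i+1)) ⊆ Icc (0:ℝ) 1 := by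
    intro i hi
    exact Icc_subset_Icc (hu01 i hi.le).1 (hu01 (i+1) hi).2
  have hdiff : ∀ i : ℕ, u (i+1) - u i = 1 / n := by
    intro i; rw [hu]; push_cast; field_simp; ring
  have huv : ∀ i : ℕ, u i ≤ u (i+1) := by
    intro i
    have := hdiff i
    have : (0:ℝ) < 1 / n := by positivity
    linarith [hdiff i]
  -- per-interval estimate
  have hper : ∀ i : ℕ, i < n →
      |(1 / (n:ℝ)) * φ ((u i + u (i+1)) / 2) - ∫ x in (u i)..(u (i+1)), φ x|
        ≤ (M * h ^ 2 / n) * (1 / n) ^ 2 := by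
    intro i hi
    have hsubI := hIcc_sub i hi
    have key := midpoint_key φ D (u i) (u (i+1)) (M * h ^ 2 / n) (huv i)
      (fun t ht => hdAt t (hsubI ht))
      (hDc.mono hsubI) ?_
    · rw [hdiff i] at key; exact key
    · intro t ht
      have hmid : (u i + u (i+1)) / 2 ∈ Icc (u i) (u (i+1)) :=
        ⟨by linarith [huv i], by linarith [huv i]⟩
      have h1 : |L1 (h*(1/2 - t)) - L1 (h*(1/2 - (u i + u (i+1)) / 2))|
          ≤ M * |h*(1/2 - t) - h*(1/2 - (u i + u (i+1)) / 2)| :=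
        hlip _ (hmem _ (hsubI hmid)) _ (hmem t (hsubI ht))
      have h2 : |h*(1/2 - t) - h*(1/2 - (u i + u (i+1)) / 2)|
          = |h| * |(u i + u (i+1)) / 2 - t| := by
        rw [← abs_mul]; congr 1; ring
      have h3 : |(u i + u (i+1)) / 2 - t| ≤ 1 / n := by
        rw [abs_le]
        constructor
        · linarith [ht.2, hmid.1, hdiff i]
        · linarith [ht.1, hmid.2, hdiff i]
      have h4 : |D t - D ((u i + u (i+1)) / 2)|
          = |L1 (h*(1/2 - t)) - L1 (h*(1/2 - (u i + u (i+1)) / 2))| * |h| := by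
        have e4 : D t - D ((u i + u (i+1)) / 2)
            = (L1 (h*(1/2 - (u i + u (i+1)) / 2)) - L1 (h*(1/2 - t))) * h := by
          simp only [hD]; ring
        rw [e4, abs_mul, abs_sub_comm]
      rw [h4]
      calc |L1 (h*(1/2 - t)) - L1 (h*(1/2 - (u i + u (i+1)) / 2))| * |h|
          ≤ (M * (|h| * |(u i + u (i+1)) / 2 - t|)) * |h| := by
            apply mul_le_mul_of_nonneg_right _ (abs_nonneg _)
            rw [← h2]; exact h1
        _ ≤ (M * (|h| * (1/n))) * |h| := by
            apply mul_le_mul_of_nonneg_right _ (abs_nonneg _)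
            apply mul_le_mul_of_nonneg_left _ hM0
            exact mul_le_mul_of_nonneg_left h3 (abs_nonneg _)
        _ = M * (|h| * |h|) / n := by ring
        _ = M * h ^ 2 / n := by rw [← abs_mul, abs_mul_self h]; ring
  -- assemble
  have hGneq : Gn n h = ∑ i ∈ Finset.range n, (1 / (n:ℝ)) * φ ((u i + u (i+1)) / 2) := by
    rw [hGn n h, Finset.mul_sum]
    apply Finset.sum_congr rfl
    intro i _
    congr 1
    rw [hφ]; dsimp only
    congr 1
    simp only [hu]
    push_cast
    field_simp
    ring
  have hsum := intervalIntegral.sum_integral_adjacent_intervals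
    (f := φ) (μ := MeasureTheory.volume) (a := u) (n := n) ?int
  case int =>
    intro i hi
    apply ContinuousOn.intervalIntegrable
    rw [uIcc_of_le (huv i)]
    exact hφc.mono (hIcc_sub i hi)
  have hu0 : u 0 = 0 := by rw [hu]; simp
  have hun : u n = 1 := by rw [hu]; field_simp
  rw [hu0, hun] at hsum
  have hGeq : G h = ∑ i ∈ Finset.range n, ∫ x in (u i)..(u (i+1)), φ x := by
    rw [hG h, hsum]
  have hsplit : Gn n h - G h = ∑ i ∈ Finset.range n,
      ((1 / (n:ℝ)) * φ ((u i + u (i+1)) / 2) - ∫ x in (u i)..(u (i+1)), φ x) := by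
    rw [hGneq, hGeq, Finset.sum_sub_distrib]
  rw [hsplit]
  refine le_trans (Finset.abs_sum_le_sum_abs _ _) ?_
  have hterm : ∀ i ∈ Finset.range n,
      |(1 / (n:ℝ)) * φ ((u i + u (i+1)) / 2) - ∫ x in (u i)..(u (i+1)), φ x|
        ≤ (M * h ^ 2 / n) * (1 / n) ^ 2 := by
    intro i hi
    exact hper i (Finset.mem_range.mp hi)
  refine le_trans (Finset.sum_le_sum hterm) ?_
  rw [Finset.sum_const, Finset.card_range, nsmul_eq_mul]
  have hh2 : h ^ 2 ≤ β ^ 2 := by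
    have := sq_abs h
    nlinarith [abs_nonneg h, hha, hK0]
  have e : (n:ℝ) * ((M * h ^ 2 / n) * (1 / n) ^ 2) = M * h ^ 2 / (n:ℝ) ^ 2 := by
    field_simp
  rw [e]
  gcongr
  nlinarith [hM0, hh2]
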